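/- arXiv:2005.04794 — 6 statements merged into one kernel-verified Lean document; each statement's English description precedes it below -/
import Mathlib

section
/- Let A be a unital C*-algebra and let u, v be unitary elements of A. Then the Jordan product (1/2)(u v + v u) is a unitary element of A if and only if u and v commute. -/
open scoped ComplexConjugate
open NormedSpace Complex

variable {A : Type*} [NormedRing A] [StarRing A] [CStarRing A] [CompleteSpace A]
  [NormedAlgebra ℂ A] [StarModule ℂ A]

theorem jordan_product_unitary_iff_commute (u v : A)
    (hu : u ∈ unitary A) (hv : v ∈ unitary A) :
    ((1/2 : ℂ) • (u * v + v * u)) ∈ unitary A ↔ u * v = v * u := by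
  have hu1 : star u * u = 1 := (Unitary.mem_iff.mp hu).1
  have hu2 : u * star u = 1 := (Unitary.mem_iff.mp hu).2
  have hv1 : star v * v = 1 := (Unitary.mem_iff.mp hv).1
  have hv2 : v * star v = 1 := (Unitary.mem_iff.mp hv).2
  have h3 : (u * v) * star (u * v) = 1 := by
    rw [star_mul, mul_assoc, ← mul_assoc v, hv2, one_mul, hu2]
  constructor
  · intro h
    have h1 : star ((1/2 : ℂ) • (u * v + v * u)) * ((1/2 : ℂ) • (u * v + v * u)) = 1 :=
      (Unitary.mem_iff.mp h).1
    set s : A := star (u * v) * (v * u) with hs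
    have expand : star ((1/2 : ℂ) • (u * v + v * u)) * ((1/2 : ℂ) • (u * v + v * u))
        = (1/4 : ℂ) • ((1 : A) + 1 + (s + star s)) := by
      rw [star_smul, smul_mul_smul_comm]
      have hc : star (1/2 : ℂ) * (1/2 : ℂ) = (1/4 : ℂ) := by
        simp [Complex.star_def]; norm_num
      rw [hc]
      congr 1
      have e1 : star v * star u * (u * v) = 1 := by
        rw [mul_assoc, ← mul_assoc (star u), hu1, one_mul, hv1]
      have e2 : star u * star v * (v * u) = 1 := by
        rw [mul_assoc, ← mul_assoc (star v), hv1, one_mul, hu1]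
      calc star (u * v + v * u) * (u * v + v * u)
          = (star v * star u) * (u * v) + (star u * star v) * (v * u)
            + ((star v * star u) * (v * u) + (star u * star v) * (u * v)) := by
            simp only [star_add, star_mul]; noncomm_ring
        _ = (1 : A) + 1 + (s + star s) := by
            rw [e1, e2]
            simp only [hs, star_mul, star_star]
    rw [expand] at h1
    have h5 : ((1 : A) + 1 + (s + star s)) = (4 : ℂ) • (1 : A) := by
      calc (1 : A) + 1 + (s + star s)
          = (4 : ℂ) • ((1/4 : ℂ) • ((1 : A) + 1 + (s + star s))) := by
            rw [smul_smul]; norm_num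
        _ = (4 : ℂ) • (1 : A) := by rw [h1]
    have h7 : ((4 : ℂ) • (1 : A)) = (4 : A) := by
      rw [← Algebra.algebraMap_eq_smul_one]
      exact map_ofNat (algebraMap ℂ A) 4
    have h2 : s + star s = 2 := by
      have h8 : s + star s = (4 : A) - (1 + 1) := by rw [← h7, ← h5]; abel
      rw [h8]; norm_num
    have hstars : star s = star (v * u) * (u * v) := by
      rw [hs, star_mul, star_star]
    have hss : star s * s = 1 := by
      rw [hstars, hs]
      calc star (v * u) * (u * v) * (star (u * v) * (v * u))
          = star (v * u) * ((u * v) * star (u * v)) * (v * u) := by noncomm_ring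
        _ = 1 := by
            rw [h3, mul_one, star_mul, mul_assoc, ← mul_assoc (star v), hv1, one_mul, hu1]
    have hzero : star (s - 1) * (s - 1) = 0 := by
      have : star (s - 1) * (s - 1) = star s * s - (s + star s) + 1 := by
        simp only [star_sub, star_one]; noncomm_ring
      rw [this, hss, h2]
      norm_num
    have hnorm : ‖s - 1‖ = 0 := by
      have := CStarRing.norm_star_mul_self (x := s - 1)
      rw [hzero, norm_zero] at this
      nlinarith [norm_nonneg (s - 1)]
    have hs1 : s = 1 := sub_eq_zero.mp (norm_eq_zero.mp hnorm)
    calc u * v = (u * v) * 1 := by rw [mul_one]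
      _ = (u * v) * (star (u * v) * (v * u)) := by rw [← hs, hs1]
      _ = ((u * v) * star (u * v)) * (v * u) := by rw [← mul_assoc]
      _ = v * u := by rw [h3, one_mul]
  · intro h
    rw [h]
    have e : (1/2 : ℂ) • (v * u + v * u) = v * u := by
      rw [← two_smul ℂ, smul_smul]
      norm_num
    rw [e]
    exact mul_mem hv hu
end

section
/- Let A be a unital C*-algebra and let u, v be unitaries in A with ‖u − v‖ < 2. Then there exists a unitary w in A such that w u* w = v. -/
open scoped ComplexConjugate
open NormedSpace Complex

variable {A : Type*} [NormedRing A] [StarRing A] [CStarRing A] [CompleteSpace A]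
  [NormedAlgebra ℂ A] [StarModule ℂ A]

noncomputable instance instCStarAlgebraOfParts : CStarAlgebra A := { }

/-- A unitary whose spectrum lies in the slit plane has a unitary square root. -/
lemma exists_unitary_sq_eq_aux {B : Type*} [CStarAlgebra B] (s : B)
    (hns : IsStarNormal s)
    (hspec : ∀ z ∈ spectrum ℂ s, z ∈ Complex.slitPlane ∧ ‖z‖ = 1) :
    ∃ t ∈ unitary B, t * t = s := by
  have hzero : ∀ z ∈ spectrum ℂ s, z ≠ 0 := fun z hz h0 => by
    simpa [h0] using (hspec z hz).2
  have hf_cont : ContinuousOn (fun z => Complex.exp (Complex.log z / 2)) (spectrum ℂ s) := by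
    refine Complex.continuous_exp.comp_continuousOn ?_
    exact ContinuousOn.div_const
      (fun z hz => (continuousAt_clog (hspec z hz).1).continuousWithinAt) 2
  refine ⟨cfc (fun z => Complex.exp (Complex.log z / 2)) s, ?_, ?_⟩
  · rw [cfc_unitary_iff _ s hns hf_cont]
    intro z hz
    have h1 : ‖z‖ = 1 := (hspec z hz).2
    simp only [RCLike.star_def, ← Complex.exp_conj, ← Complex.exp_add]
    have hre : (Complex.log z).re = 0 := by
      rw [Complex.log_re, h1, Real.log_one]
    have hconj : (starRingEnd ℂ) (Complex.log z) = - Complex.log z :=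
      Complex.ext (by simp [hre]) (by simp)
    rw [map_div₀, hconj, map_ofNat, neg_div, neg_add_cancel, Complex.exp_zero]
  · rw [← cfc_mul _ _ s hf_cont hf_cont]
    have key : ∀ z ∈ spectrum ℂ s,
        Complex.exp (Complex.log z / 2) * Complex.exp (Complex.log z / 2) = z := by
      intro z hz
      rw [← Complex.exp_add, ← add_div, add_self_div_two]
      exact Complex.exp_log (hzero z hz)
    calc cfc (fun z => Complex.exp (Complex.log z / 2) * Complex.exp (Complex.log z / 2)) s
        = cfc (id : ℂ → ℂ) s := cfc_congr key
      _ = s := cfc_id ℂ s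

theorem exists_unitary_wuw_eq (u v : A) (hu : u ∈ unitary A) (hv : v ∈ unitary A)
    (h : ‖u - v‖ < 2) :
    ∃ w ∈ unitary A, w * star u * w = v := by
  rcases subsingleton_or_nontrivial A with hA | hA
  · exact ⟨1, one_mem _, Subsingleton.elim _ _⟩
  set s : A := v * star u with hs_def
  have hs : s ∈ unitary A := mul_mem hv (Unitary.star_mem hu)
  have hns : IsStarNormal s := isStarNormal_of_mem_unitary hs
  -- norm bound : ‖1 - s‖ < 2
  have hnorm : ‖(1 : A) - s‖ < 2 := by
    have : (1 : A) - s = (u - v) * star u := by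
      rw [sub_mul, hs_def, Unitary.mul_star_self_of_mem hu]
    rw [this]
    calc ‖(u - v) * star u‖ ≤ ‖u - v‖ * ‖star u‖ := norm_mul_le _ _
      _ ≤ ‖u - v‖ * 1 := by
          gcongr
          rw [norm_star]
          exact le_of_eq (CStarRing.norm_coe_unitary ⟨u, hu⟩)
      _ < 2 := by simpa using h
  -- spectrum of s is in slitPlane
  have hspec : ∀ z ∈ spectrum ℂ s, z ∈ Complex.slitPlane ∧ ‖z‖ = 1 := by
    intro z hz
    have hcirc : ‖z‖ = 1 := by
      have := Unitary.spectrum_subset_circle (E := A) ⟨s, hs⟩ hz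
      simpa [Metric.mem_sphere, dist_eq_norm] using this
    have hne : z ≠ -1 := by
      intro hzeq
      have h1z : (1 : ℂ) - z ∈ spectrum ℂ ((1 : A) - s) := by
        have h1s := spectrum.singleton_sub_eq s (1 : ℂ)
        rw [map_one] at h1s
        rw [← h1s]
        exact Set.sub_mem_sub rfl hz
      have := spectrum.norm_le_norm_of_mem h1z
      rw [hzeq] at this
      norm_num at this
      linarith
    refine ⟨?_, hcirc⟩
    rw [Complex.mem_slitPlane_iff]
    by_contra hcon
    push_neg at hcon
    obtain ⟨hre, him⟩ := hcon
    have hz' : z = (z.re : ℂ) := by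
      exact Complex.ext rfl (by simpa using him)
    have habs : |z.re| = 1 := by
      have := hcirc
      rw [hz'] at this
      simpa using this
    have : z.re = -1 := by
      rcases abs_eq (by norm_num : (0:ℝ) ≤ 1) |>.mp habs with h1 | h1
      · linarith
      · exact h1
    exact hne (by rw [hz', this]; norm_num)
  obtain ⟨t, ht_unitary, ht_sq⟩ := exists_unitary_sq_eq_aux s hns hspec
  refine ⟨t * u, mul_mem ht_unitary hu, ?_⟩
  calc t * u * star u * (t * u) = t * (u * star u) * t * u := by noncomm_ring
    _ = t * t * u := by rw [Unitary.mul_star_self_of_mem hu, mul_one]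
    _ = v * star u * u := by rw [ht_sq, hs_def]
    _ = v := by rw [mul_assoc, Unitary.star_mul_self_of_mem hu, mul_one]
end

section
/- Let A be a unital C*-algebra and let u, w be unitaries in A such that w u* w = u and ‖u − w‖ < 2. Then w = u. -/
open scoped ComplexConjugate
open NormedSpace Complex

variable {A : Type*} [NormedRing A] [StarRing A] [CStarRing A] [CompleteSpace A]
  [NormedAlgebra ℂ A] [StarModule ℂ A]

theorem wuw_eq_u_implies_w_eq_u (u w : A) (hu : u ∈ unitary A) (hw : w ∈ unitary A)
    (h1 : w * star u * w = u) (h2 : ‖u - w‖ < 2) : w = u := by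
  cases subsingleton_or_nontrivial A with
  | inl h => exact Subsingleton.elim _ _
  | inr h =>
    set v : A := star u * w with hv
    have hv2 : v * v = 1 := by
      have : v * v = star u * (w * star u * w) := by
        simp [hv, mul_assoc]
      rw [this, h1, hu.1]
    -- ‖1 - v‖ < 2
    have hnorm : ‖1 - v‖ < 2 := by
      have : u * (1 - v) = u - w := by
        rw [mul_sub, mul_one, hv, ← mul_assoc, hu.2, one_mul]
      calc ‖1 - v‖ = ‖u * (1 - v)‖ := (CStarRing.norm_mem_unitary_mul _ hu).symm
        _ = ‖u - w‖ := by rw [this]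
        _ < 2 := h2
    -- -1 ∉ spectrum ℂ v
    have hspec : (-1 : ℂ) ∉ spectrum ℂ v := by
      intro hmem
      have h2mem : (2 : ℂ) ∈ spectrum ℂ ((1 : A) - v) := by
        have key := spectrum.singleton_sub_eq v (1:ℂ)
        rw [map_one] at key
        rw [← key]
        exact ⟨1, rfl, -1, hmem, by norm_num⟩
      have := spectrum.norm_le_norm_of_mem h2mem
      norm_num at this
      linarith
    have hunit : IsUnit (1 + v) := by
      have := spectrum.notMem_iff.mp hspec
      rw [Algebra.algebraMap_eq_smul_one] at this
      have : IsUnit (-(1 + v)) := by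
        convert this using 1
        simp [sub_eq_add_neg]
        simp [add_comm]
      exact (IsUnit.neg_iff _).mp this
    have hveq : v = 1 := by
      have hfac : (1 + v) * (v - 1) = 0 := by
        have : (1 + v) * (v - 1) = v * v - 1 := by noncomm_ring
        rw [this, hv2, sub_self]
      have := (hunit.mul_right_eq_zero).mp hfac
      rw [sub_eq_zero] at this
      exact this
    have : star u * w = 1 := by rw [← hv, hveq]
    calc w = u * (star u * w) := by rw [← mul_assoc, hu.2, one_mul]
      _ = u := by rw [this, mul_one]
end

section
/- Let (X, d_X) and (Y, d_Y) be metric spaces, let a, c ∈ X, and let φ : X → X be a distance-preserving map with φ(c) = c and φ ∘ φ = id_X. Set L = {x ∈ X : d_X(a, x) = d_X(φ(a), x) = d_X(a, c)}. Suppose there is a constant K > 1 such that d_X(φ(x), x) ≥ K · d_X(x, c) for all x ∈ L. If Δ : X → Y is a bijective distance-preserving map and ψ : Y → Y is a bijective distance-preserving map satisfying ψ(Δ(a)) = Δ(φ(a)) and ψ(Δ(φ(a))) = Δ(a), then ψ(Δ(c)) = Δ(c). -/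
theorem metric_group_fixed_point {X Y : Type*} [MetricSpace X] [MetricSpace Y]
    (a c : X) (φ : X → X) (hφ : Isometry φ) (hφc : φ c = c)
    (hφφ : φ ∘ φ = id)
    (K : ℝ) (hK : 1 < K)
    (hL : ∀ x, dist a x = dist (φ a) x → dist a x = dist a c →
      K * dist x c ≤ dist (φ x) x)
    (Δ : X → Y) (hΔ : Function.Bijective Δ) (hΔd : Isometry Δ)
    (ψ : Y → Y) (hψ : Function.Bijective ψ) (hψd : Isometry ψ)
    (h1 : ψ (Δ a) = Δ (φ a)) (h2 : ψ (Δ (φ a)) = Δ a) :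
    ψ (Δ c) = Δ c := by
  have hφinv : Function.Involutive φ := fun x => congrFun hφφ x
  let φe : X ≃ᵢ X := ⟨hφinv.toPerm, hφ⟩
  let Δe : X ≃ᵢ Y := ⟨Equiv.ofBijective Δ hΔ, hΔd⟩
  let ψe : Y ≃ᵢ Y := ⟨Equiv.ofBijective ψ hψ, hψd⟩
  have hΔe : ∀ x, Δe x = Δ x := fun x => rfl
  have hψe : ∀ y, ψe y = ψ y := fun y => rfl
  have hφe : ∀ x, φe x = φ x := fun x => rfl
  let e₀ : X ≃ᵢ X := Δe.trans (ψe.trans (Δe.symm.trans φe))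
  have he₀ : ∀ x, e₀ x = φ (Δe.symm (ψ (Δ x))) := fun x => rfl
  have hsymm : ∀ x : X, Δe.symm (Δ x) = x := fun x => Δe.symm_apply_apply x
  have he₀a : e₀ a = a := by
    rw [he₀, h1, hsymm, hφinv]
  have he₀fa : e₀ (φ a) = φ a := by
    rw [he₀, h2, hsymm]
  have hK0 : (0:ℝ) < K := lt_trans one_pos hK
  -- key induction
  have key : ∀ n : ℕ, ∃ e : X ≃ᵢ X, e a = a ∧ e (φ a) = φ a ∧
      K ^ n * dist (e₀ c) c ≤ dist (e c) c := by
    intro n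
    induction n with
    | zero => exact ⟨e₀, he₀a, he₀fa, by simp⟩
    | succ n ih =>
      obtain ⟨e, hea, hefa, hed⟩ := ih
      refine ⟨φe.trans (e.trans (φe.trans e.symm)), ?_, ?_, ?_⟩
      · show e.symm (φ (e (φ a))) = a
        rw [hefa, hφinv]
        exact e.toEquiv.symm_apply_eq.mpr hea.symm
      · show e.symm (φ (e (φ (φ a)))) = φ a
        rw [hφinv a, hea]
        exact e.toEquiv.symm_apply_eq.mpr hefa.symm
      · show K ^ (n+1) * dist (e₀ c) c ≤ dist (e.symm (φ (e (φ c)))) c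
        rw [hφc]
        have h5 : dist (e.symm (φ (e c))) c = dist (φ (e c)) (e c) := by
          rw [← e.dist_eq (e.symm (φ (e c))) c, e.apply_symm_apply]
        rw [h5]
        have hmem2 : dist a (e c) = dist a c := by
          conv_lhs => rw [← hea]
          rw [e.dist_eq]
        have hmem1 : dist a (e c) = dist (φ a) (e c) := by
          rw [hmem2]
          have h7 : dist (φ a) (e c) = dist a c := by
            conv_lhs => rw [← hefa]
            rw [e.dist_eq]
            conv_lhs => rw [← hφc]
            exact hφ.dist_eq a c
          rw [h7]
        have := hL (e c) hmem1 hmem2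
        calc K ^ (n+1) * dist (e₀ c) c = K * (K ^ n * dist (e₀ c) c) := by ring
          _ ≤ K * dist (e c) c := by
              exact mul_le_mul_of_nonneg_left hed (le_of_lt hK0)
          _ ≤ dist (φ (e c)) (e c) := this
  -- conclude dist (e₀ c) c = 0
  have hD : dist (e₀ c) c = 0 := by
    by_contra h
    have hDpos : 0 < dist (e₀ c) c := lt_of_le_of_ne dist_nonneg (Ne.symm h)
    obtain ⟨n, hn⟩ := pow_unbounded_of_one_lt (2 * dist a c / dist (e₀ c) c) hK
    obtain ⟨e, hea, _, hed⟩ := key n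
    have hbound : dist (e c) c ≤ 2 * dist a c := by
      have : dist (e c) c ≤ dist (e c) a + dist a c := dist_triangle _ _ _
      have h2' : dist (e c) a = dist c a := by
        rw [show a = e a from hea.symm, e.dist_eq, hea]
      rw [h2', dist_comm c a] at this
      linarith
    have : 2 * dist a c / dist (e₀ c) c * dist (e₀ c) c < K ^ n * dist (e₀ c) c :=
      mul_lt_mul_of_pos_right hn hDpos
    rw [div_mul_cancel₀ _ (ne_of_gt hDpos)] at this
    linarith
  have he₀c : e₀ c = c := by rwa [dist_eq_zero] at hD
  -- unfold
  rw [he₀] at he₀c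
  have hx : φ (Δe.symm (ψ (Δ c))) = φ c := by rw [hφc]; exact he₀c
  have : Δe.symm (ψ (Δ c)) = c := hφinv.injective hx
  have := congrArg Δe this
  rwa [Δe.apply_symm_apply] at this
end

section
/- Let H be a complex Hilbert space and let u, v be unitary operators on H with ‖u − v‖ < 1/2. Set K := 2 − 2‖u − v‖ (so K > 1). Then for every unitary w on H satisfying ‖u − w‖ = ‖v u⁻¹ v − w‖ = ‖u − v‖, one has ‖v w⁻¹ v − w‖ ≥ K · ‖w − v‖. -/
open NormedSpace Complex

theorem hatori_molnar_condition_B {H : Type*} [NormedAddCommGroup H]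
    [InnerProductSpace ℂ H] [CompleteSpace H]
    (u v : H →L[ℂ] H) (hu : u ∈ unitary (H →L[ℂ] H)) (hv : v ∈ unitary (H →L[ℂ] H))
    (huv : ‖u - v‖ < 1/2) :
    ∀ w ∈ unitary (H →L[ℂ] H),
      ‖u - w‖ = ‖v * star u * v - w‖ → ‖u - w‖ = ‖u - v‖ →
        (2 - 2 * ‖u - v‖) * ‖w - v‖ ≤ ‖v * star w * v - w‖ := by
  intro w hw _h1 h2
  set a : H →L[ℂ] H := star v * w with ha
  have hvv : v * star v = 1 := Unitary.mul_star_self_of_mem hv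
  have hnv : ∀ x : H →L[ℂ] H, ‖v * x‖ = ‖x‖ := fun x =>
    CStarRing.norm_mem_unitary_mul x hv
  have haU : a ∈ unitary (H →L[ℂ] H) := mul_mem (Unitary.star_mem hv) hw
  have hna : ∀ x : H →L[ℂ] H, ‖star a * x‖ = ‖x‖ := fun x =>
    CStarRing.norm_mem_unitary_mul x (Unitary.star_mem haU)
  have hsa : star a * a = 1 := Unitary.star_mul_self_of_mem haU
  -- ‖w - v‖ = ‖a - 1‖
  have e1 : ‖w - v‖ = ‖a - 1‖ := by
    have h : v * (a - 1) = w - v := by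
      rw [ha, mul_sub, ← mul_assoc, hvv, one_mul, mul_one]
    rw [← h, hnv]
  -- ‖v * star w * v - w‖ = ‖star a - a‖
  have e2 : ‖v * star w * v - w‖ = ‖star a - a‖ := by
    have hstara : star a = star w * v := by
      rw [ha, star_mul, star_star]
    have h : v * (star a - a) = v * star w * v - w := by
      rw [hstara, ha, mul_sub, ← mul_assoc, ← mul_assoc, hvv, one_mul]
    rw [← h, hnv]
  -- ‖star a - a‖ = ‖a * a - 1‖
  have e3 : ‖star a - a‖ = ‖a * a - 1‖ := by
    have h : star a * (a * a - 1) = a - star a := by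
      rw [mul_sub, ← mul_assoc, hsa, one_mul, mul_one]
    rw [norm_sub_rev, ← h, hna]
  -- key algebraic identity and triangle inequality
  have key : 2 * ‖a - 1‖ ≤ ‖a * a - 1‖ + ‖a - 1‖ * ‖a - 1‖ := by
    have hid : (a - 1) + (a - 1) = (a * a - 1) - (a - 1) * (a - 1) := by
      noncomm_ring
    have h1 : ‖(a - 1) + (a - 1)‖ = 2 * ‖a - 1‖ := by
      rw [← two_smul ℝ (a - 1), norm_smul]
      simp
    calc 2 * ‖a - 1‖ = ‖(a * a - 1) - (a - 1) * (a - 1)‖ := by rw [← h1, hid]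
      _ ≤ ‖a * a - 1‖ + ‖(a - 1) * (a - 1)‖ := norm_sub_le _ _
      _ ≤ ‖a * a - 1‖ + ‖a - 1‖ * ‖a - 1‖ := by
          gcongr; exact norm_mul_le _ _
  -- ‖w - v‖ ≤ 2‖u - v‖
  have hle : ‖w - v‖ ≤ 2 * ‖u - v‖ := by
    calc ‖w - v‖ ≤ ‖w - u‖ + ‖u - v‖ := norm_sub_le_norm_sub_add_norm_sub _ _ _
      _ = ‖u - v‖ + ‖u - v‖ := by rw [norm_sub_rev, h2]
      _ = 2 * ‖u - v‖ := by ring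
  have hx0 : (0:ℝ) ≤ ‖w - v‖ := norm_nonneg _
  rw [e2, e3]
  rw [e1] at hle hx0 ⊢
  nlinarith [norm_nonneg (a - 1)]
end

section
/- Let A be a unital C*-algebra and suppose {u(t) : t ∈ ℝ} is a family of unitaries in A with u(0) = 1 and u(t) u(s) u(t) = u(2t + s) for all s, t ∈ ℝ. Then u(t)* = u(t)⁻¹ = u(−t) for all t ∈ ℝ, and u(t + s) = u(t) u(s) = u(s) u(t) for all rational t, s. -/
open scoped ComplexConjugate
open NormedSpace Complex

variable {A : Type*} [NormedRing A] [StarRing A] [CStarRing A] [CompleteSpace A]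
  [NormedAlgebra ℂ A] [StarModule ℂ A]

theorem unitary_family_star_and_rational_additivity (u : ℝ → A)
    (hu : ∀ t, u t ∈ unitary A) (h0 : u 0 = 1)
    (hgroup : ∀ t s : ℝ, u t * u s * u t = u (2 * t + s)) :
    (∀ t : ℝ, star (u t) = u (-t) ∧ u t * u (-t) = 1 ∧ u (-t) * u t = 1) ∧
      (∀ q r : ℚ, u (q + r) = u q * u r ∧ u q * u r = u r * u q) := by
  set w : ℝ → unitary A := fun t => ⟨u t, hu t⟩ with hw
  have hw0 : w 0 = 1 := Subtype.ext h0
  have hwg : ∀ t s : ℝ, w t * w s * w t = w (2 * t + s) :=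
    fun t s => Subtype.ext (hgroup t s)
  have hneg : ∀ t : ℝ, w (-t) = (w t)⁻¹ := by
    intro t
    have h := hwg t (-t)
    rw [show 2 * t + -t = t by ring] at h
    have h1 : w t * w (-t) = 1 := mul_right_cancel (h.trans (one_mul (w t)).symm)
    exact (inv_eq_of_mul_eq_one_right h1).symm
  -- natural powers
  have hnat : ∀ (n : ℕ) (x : ℝ), w ((n : ℝ) * x) = w x ^ n := by
    intro n
    induction n using Nat.strong_induction_on with
    | _ n ih =>
      match n with
      | 0 => intro x; simpa using hw0
      | 1 => intro x; simp
      | (n + 2) =>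
        intro x
        have h := hwg x ((n : ℝ) * x)
        rw [show 2 * x + (n : ℝ) * x = ((n + 2 : ℕ) : ℝ) * x by push_cast; ring] at h
        rw [← h, ih n (by omega) x]
        rw [pow_succ, pow_succ']
  have hint : ∀ (m : ℤ) (x : ℝ), w ((m : ℝ) * x) = w x ^ m := by
    intro m x
    obtain ⟨n, rfl | rfl⟩ := m.eq_nat_or_neg
    · rw [zpow_natCast]; exact_mod_cast hnat n x
    · push_cast
      rw [neg_mul, hneg, hnat, zpow_neg, zpow_natCast]
  constructor
  · intro t
    have h1 : w t * w (-t) = 1 := by rw [hneg]; exact mul_inv_cancel _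
    have h2 : w (-t) * w t = 1 := by rw [hneg]; exact inv_mul_cancel _
    refine ⟨?_, congrArg Subtype.val h1, congrArg Subtype.val h2⟩
    have : star (w t : A) = ((w t)⁻¹ : unitary A) := rfl
    rw [this, ← hneg]
  · intro q r
    set n : ℕ := q.den * r.den with hn
    have hnpos : (0 : ℝ) < (n : ℝ) := by positivity
    set x : ℝ := 1 / (n : ℝ) with hx
    have hq : (q : ℝ) = ((q.num * r.den : ℤ) : ℝ) * x := by
      rw [hx, hn, Rat.cast_def]
      push_cast
      field_simp
    have hr : (r : ℝ) = ((r.num * q.den : ℤ) : ℝ) * x := by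
      rw [hx, hn, Rat.cast_def]
      push_cast
      field_simp
    have hqr : ((q : ℝ) + (r : ℝ)) = ((q.num * r.den + r.num * q.den : ℤ) : ℝ) * x := by
      rw [hq, hr]
      push_cast
      ring
    have key : w ((q : ℝ) + (r : ℝ)) = w ((q : ℚ) : ℝ) * w ((r : ℚ) : ℝ) := by
      rw [hqr, hq, hr, hint, hint, hint, zpow_add]
    have keyc : w ((q : ℚ) : ℝ) * w ((r : ℚ) : ℝ) = w ((r : ℚ) : ℝ) * w ((q : ℚ) : ℝ) := by
      rw [hq, hr, hint, hint]
      exact (Commute.zpow_zpow (Commute.refl _) _ _)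
    exact ⟨congrArg Subtype.val key, congrArg Subtype.val keyc⟩
end
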